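/- If X is a homogeneous θⁿ-Urysohn topological space, then |X| ≤ 2^(θⁿ-Uc(X) · π_χ(X)), where θⁿ-Uc(X) is the θⁿ-Urysohn cellularity and π_χ(X) is the π-character of X. -/

import Mathlib

open Set Topology Cardinal

universe u v

def thetaCl (X : Type u) [TopologicalSpace X] (A : Set X) : Set X :=
  {x | ∀ U : Set X, IsOpen U → x ∈ U → (closure U ∩ A).Nonempty}

def thetaClN (X : Type u) [TopologicalSpace X] (n : ℕ) (A : Set X) : Set X :=
  (thetaCl X)^[n] A

def gammaCl (X : Type u) [TopologicalSpace X] (n : ℕ) (A : Set X) : Set X :=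
  {x | ∀ U : Set X, IsOpen U → x ∈ U → (thetaClN X n U ∩ A).Nonempty}

def ThetaUrysohn (X : Type u) [TopologicalSpace X] (n : ℕ) : Prop :=
  ∀ x y : X, x ≠ y → ∃ U V : Set X, IsOpen U ∧ IsOpen V ∧ x ∈ U ∧ y ∈ V ∧
    thetaClN X n U ∩ thetaClN X n V = ∅

noncomputable def thetaUc (X : Type u) [TopologicalSpace X] (n : ℕ) : Cardinal.{u} :=
  sSup {c | ∃ V : Set (Set X), (∀ U ∈ V, IsOpen U) ∧
    (∀ U₁ ∈ V, ∀ U₂ ∈ V, U₁ ≠ U₂ → thetaClN X n U₁ ∩ thetaClN X n U₂ = ∅) ∧ c = #V}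

noncomputable def piChar (X : Type u) [TopologicalSpace X] : Cardinal.{u} :=
  ⨆ x : X, sInf {κ | ∃ B : Set (Set X), #B ≤ κ ∧ (∀ U ∈ B, IsOpen U ∧ U.Nonempty) ∧
    ∀ V : Set X, IsOpen V → x ∈ V → ∃ U ∈ B, U ⊆ V}

/-! ### Auxiliary lemmas about the θ-closure -/

section ThetaLemmas

variable {X : Type u} [TopologicalSpace X]

theorem subset_thetaCl (A : Set X) : A ⊆ thetaCl X A := by
  intro x hx U hU hxU
  exact ⟨x, subset_closure hxU, hx⟩

theorem thetaCl_mono {A B : Set X} (h : A ⊆ B) : thetaCl X A ⊆ thetaCl X B := by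
  intro x hx U hU hxU
  exact (hx U hU hxU).mono (inter_subset_inter_right _ h)

theorem subset_thetaClN (n : ℕ) (A : Set X) : A ⊆ thetaClN X n A := by
  induction n with
  | zero => exact subset_rfl
  | succ k ih =>
      have : thetaClN X (k+1) A = thetaCl X (thetaClN X k A) := by
        simp [thetaClN, Function.iterate_succ_apply']
      rw [this]
      exact ih.trans (subset_thetaCl _)

theorem thetaClN_mono (n : ℕ) {A B : Set X} (h : A ⊆ B) :
    thetaClN X n A ⊆ thetaClN X n B := by
  induction n with
  | zero => exact h
  | succ k ih =>
      have h1 : thetaClN X (k+1) A = thetaCl X (thetaClN X k A) := by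
        simp [thetaClN, Function.iterate_succ_apply']
      have h2 : thetaClN X (k+1) B = thetaCl X (thetaClN X k B) := by
        simp [thetaClN, Function.iterate_succ_apply']
      rw [h1, h2]
      exact thetaCl_mono ih

/-- The defining set for `thetaUc` is bounded above. -/
theorem bddAbove_ucSet (n : ℕ) :
    BddAbove {c | ∃ V : Set (Set X), (∀ U ∈ V, IsOpen U) ∧
      (∀ U₁ ∈ V, ∀ U₂ ∈ V, U₁ ≠ U₂ → thetaClN X n U₁ ∩ thetaClN X n U₂ = ∅) ∧ c = #V} := by
  refine ⟨#(Set X), ?_⟩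
  rintro c ⟨V, -, -, rfl⟩
  exact Cardinal.mk_subtype_le _

theorem le_thetaUc {n : ℕ} {c : Cardinal.{u}} (V : Set (Set X))
    (hopen : ∀ U ∈ V, IsOpen U)
    (hcell : ∀ U₁ ∈ V, ∀ U₂ ∈ V, U₁ ≠ U₂ → thetaClN X n U₁ ∩ thetaClN X n U₂ = ∅)
    (hc : c = #V) : c ≤ thetaUc X n :=
  le_csSup (bddAbove_ucSet n) ⟨V, hopen, hcell, hc⟩

/-- Every point has a local π-base of size at most `piChar X`. -/
theorem exists_piBase (x : X) :
    ∃ B : Set (Set X), #B ≤ piChar X ∧ (∀ U ∈ B, IsOpen U ∧ U.Nonempty) ∧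
      ∀ V : Set X, IsOpen V → x ∈ V → ∃ U ∈ B, U ⊆ V := by
  set S := {κ | ∃ B : Set (Set X), #B ≤ κ ∧ (∀ U ∈ B, IsOpen U ∧ U.Nonempty) ∧
    ∀ V : Set X, IsOpen V → x ∈ V → ∃ U ∈ B, U ⊆ V} with hS
  have hne : S.Nonempty := by
    refine ⟨#({U : Set X | IsOpen U ∧ U.Nonempty}), {U : Set X | IsOpen U ∧ U.Nonempty},
      le_rfl, fun U hU => hU, ?_⟩
    intro V hV hxV
    exact ⟨V, ⟨hV, ⟨x, hxV⟩⟩, subset_rfl⟩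
  obtain ⟨B, hB1, hB2, hB3⟩ := csInf_mem hne
  have hle : sInf S ≤ piChar X := by
    have := le_ciSup (Cardinal.bddAbove_range
      (fun x : X => sInf {κ | ∃ B : Set (Set X), #B ≤ κ ∧ (∀ U ∈ B, IsOpen U ∧ U.Nonempty) ∧
        ∀ V : Set X, IsOpen V → x ∈ V → ∃ U ∈ B, U ⊆ V})) x
    exact this
  exact ⟨B, hB1.trans hle, hB2, hB3⟩

theorem one_le_piChar [Nonempty X] : 1 ≤ piChar X := by
  obtain ⟨B, hB1, hB2, hB3⟩ := exists_piBase (X := X) (Classical.arbitrary X)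
  obtain ⟨U, hU, -⟩ := hB3 univ isOpen_univ (mem_univ _)
  refine le_trans ?_ hB1
  rw [Cardinal.one_le_iff_ne_zero, Cardinal.mk_ne_zero_iff]
  exact ⟨U, hU⟩

theorem one_le_thetaUc (n : ℕ) : 1 ≤ thetaUc X n := by
  refine le_thetaUc ({∅} : Set (Set X)) ?_ ?_ ?_
  · rintro U rfl; exact isOpen_empty
  · rintro U₁ rfl U₂ rfl h; exact absurd rfl h
  · simp

end ThetaLemmas

/-! ### The Erdős–Rado theorem for pairs -/

section ErdosRado

variable {ι : Type u} {C : Type u} [LinearOrder ι] [WellFoundedLT ι]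
variable {J : Type u} [LinearOrder J] [WellFoundedLT J]

/-- The auxiliary sequence in the proof of the Erdős–Rado theorem: given `x`, at step `j` we
pick the least element that realizes the same colors with the previously picked elements as
`x` does (and is distinct from all of them). -/
noncomputable def erSeq (J : Type u) [LinearOrder J] [WellFoundedLT J]
    (F : ι → ι → C) (x : ι) : J → ι :=
  (wellFounded_lt (α := J)).fix fun j rec =>
    (wellFounded_lt (α := ι)).min
      (insert x {a : ι | ∀ i (h : i < j), rec i h ≠ a ∧ F (rec i h) a = F (rec i h) x})
      (insert_nonempty _ _)

/-- The candidate set at step `j`. -/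
def erSet (J : Type u) [LinearOrder J] [WellFoundedLT J]
    (F : ι → ι → C) (x : ι) (j : J) : Set ι :=
  {a : ι | ∀ i, i < j → erSeq J F x i ≠ a ∧ F (erSeq J F x i) a = F (erSeq J F x i) x}

theorem erSeq_def (F : ι → ι → C) (x : ι) (j : J) :
    erSeq J F x j = (wellFounded_lt (α := ι)).min
      (insert x (erSet J F x j)) (insert_nonempty _ _) := by
  rw [erSeq, WellFounded.fix_eq]
  rfl

theorem self_mem_erSet {F : ι → ι → C} {x : ι} {j : J}
    (h : ∀ i, i < j → erSeq J F x i ≠ x) : x ∈ erSet J F x j :=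
  fun i hi => ⟨h i hi, rfl⟩

theorem erSeq_mem {F : ι → ι → C} {x : ι} {j : J}
    (h : ∀ i, i < j → erSeq J F x i ≠ x) : erSeq J F x j ∈ erSet J F x j := by
  have hxm : x ∈ erSet J F x j := self_mem_erSet h
  have hmem := (wellFounded_lt (α := ι)).min_mem
    (insert x (erSet J F x j)) (insert_nonempty _ _)
  rw [erSeq_def]
  rcases hmem with h' | h'
  · rw [h']; exact hxm
  · exact h'

/-- Key uniqueness: if two points have the same "color trace" along their sequences (with the
same stopping time), they are equal. -/
theorem erSeq_eq_of_trace_eq {F : ι → ι → C} {x y : ι} {d : J}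
    (hx : erSeq J F x d = x) (hxmin : ∀ j, j < d → erSeq J F x j ≠ x)
    (hy : erSeq J F y d = y) (hymin : ∀ j, j < d → erSeq J F y j ≠ y)
    (htr : ∀ i, i < d → F (erSeq J F x i) x = F (erSeq J F y i) y) : x = y := by
  have key : ∀ j : J, j ≤ d → erSeq J F x j = erSeq J F y j := by
    intro j
    induction j using ((wellFounded_lt (α := J)).induction) with
    | _ j IH =>
      intro hjd
      have hpt : ∀ i, i < j → erSeq J F x i = erSeq J F y i := fun i hi =>
        IH i hi (le_of_lt (lt_of_lt_of_le hi hjd))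
      have hSeq : erSet J F x j = erSet J F y j := by
        ext a
        constructor
        · intro ha i hi
          have he : erSeq J F x i = erSeq J F y i := hpt i hi
          have hc : F (erSeq J F x i) x = F (erSeq J F y i) y :=
            htr i (lt_of_lt_of_le hi hjd)
          refine ⟨he ▸ (ha i hi).1, ?_⟩
          calc F (erSeq J F y i) a = F (erSeq J F x i) a := by rw [he]
            _ = F (erSeq J F x i) x := (ha i hi).2
            _ = F (erSeq J F y i) y := hc
        · intro ha i hi
          have he : erSeq J F x i = erSeq J F y i := hpt i hi
          have hc : F (erSeq J F x i) x = F (erSeq J F y i) y :=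
            htr i (lt_of_lt_of_le hi hjd)
          refine ⟨he ▸ (ha i hi).1, ?_⟩
          calc F (erSeq J F x i) a = F (erSeq J F y i) a := by rw [he]
            _ = F (erSeq J F y i) y := (ha i hi).2
            _ = F (erSeq J F x i) x := hc.symm
      have hxm : ∀ i, i < j → erSeq J F x i ≠ x := fun i hi =>
        hxmin i (lt_of_lt_of_le hi hjd)
      have hym : ∀ i, i < j → erSeq J F y i ≠ y := fun i hi =>
        hymin i (lt_of_lt_of_le hi hjd)
      have hinsx : insert x (erSet J F x j) = erSet J F x j :=
        insert_eq_self.mpr (self_mem_erSet hxm)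
      have hinsy : insert y (erSet J F y j) = erSet J F y j :=
        insert_eq_self.mpr (self_mem_erSet hym)
      rw [erSeq_def (j := j), erSeq_def (j := j)]
      have hset : insert x (erSet J F x j) = insert y (erSet J F y j) := by
        rw [hinsx, hinsy, hSeq]
      congr 1
  calc x = erSeq J F x d := hx.symm
    _ = erSeq J F y d := key d le_rfl
    _ = y := hy

/-- The Erdős–Rado theorem for pairs: `(2^κ)⁺ → (κ⁺)²_κ`. -/
theorem erdos_rado_pairs {κ : Cardinal.{u}} (hκ : ℵ₀ ≤ κ)
    (hC : #C ≤ κ) (hι : Order.succ (2 ^ κ) ≤ #ι)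
    (F : ι → ι → C) (hF : ∀ a b, F a b = F b a) :
    ∃ (H : Set ι) (c : C), Order.succ κ ≤ #H ∧
      ∀ a ∈ H, ∀ b ∈ H, a ≠ b → F a b = c := by
  let J : Type u := (Order.succ κ).ord.ToType
  by_cases hall : ∀ x : ι, ∃ j : J, erSeq J F x j = x
  · -- the counting case: impossible
    exfalso
    -- stopping time
    let δ : ι → J := fun x => (wellFounded_lt (α := J)).min {j | erSeq J F x j = x} (hall x)
    have hδ : ∀ x, erSeq J F x (δ x) = x := fun x =>
      WellFounded.min_mem _ {j | erSeq J F x j = x} (hall x)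
    have hδmin : ∀ x, ∀ j, j < δ x → erSeq J F x j ≠ x := by
      intro x j hj hmem
      exact (wellFounded_lt (α := J)).not_lt_min {j | erSeq J F x j = x} hmem hj
    let ψ : (Σ d : J, (Iio d → C)) → J × (J → Option C) := fun p =>
      (p.1, fun i => if h : i < p.1 then some (p.2 ⟨i, h⟩) else none)
    let Φ : ι → J × (J → Option C) := fun x =>
      ψ ⟨δ x, fun i => F (erSeq J F x i.1) x⟩
    have hΦinj : Function.Injective Φ := by
      intro x y hxy
      have hd : δ x = δ y := congrArg Prod.fst hxy
      have hsnd := congrArg Prod.snd hxy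
      have htr : ∀ i : J, i < δ x → F (erSeq J F x i) x = F (erSeq J F y i) y := by
        intro i hi
        have := congrFun hsnd i
        simp only [ψ, Φ] at this
        rw [dif_pos hi, dif_pos (hd ▸ hi)] at this
        exact Option.some.inj this
      exact erSeq_eq_of_trace_eq (hδ x) (hδmin x) (hd ▸ hδ y) (fun j hj => hδmin y j (hd ▸ hj))
        htr
    -- counting
    have hcount : #ι ≤ 2 ^ κ := by
      have h1 : #ι = #(range Φ) := (Cardinal.mk_range_eq Φ hΦinj).symm
      have h2 : range Φ ⊆ range ψ := by
        rintro - ⟨x, rfl⟩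
        exact ⟨_, rfl⟩
      have h3 : #(range ψ) ≤ #(Σ d : J, (Iio d → C)) := Cardinal.mk_range_le
      have h4 : #(Σ d : J, (Iio d → C)) ≤ 2 ^ κ := by
        rw [Cardinal.mk_sigma]
        have hsummand : ∀ d : J, #(Iio d → C) ≤ 2 ^ κ := by
          intro d
          rw [← Cardinal.power_def]
          have hIio : #(Iio d) ≤ κ := by
            have := Cardinal.mk_Iio_ord_toType (c := Order.succ κ) d
            exact Order.lt_succ_iff.mp this
          calc #C ^ #(Iio d) ≤ κ ^ #(Iio d) :=
                Cardinal.power_le_power_right hC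
            _ ≤ κ ^ κ := Cardinal.power_le_power_left
                (by exact (aleph0_pos.trans_le hκ).ne') hIio
            _ = 2 ^ κ := Cardinal.power_self_eq hκ
        calc (Cardinal.sum fun d : J => #(Iio d → C))
            ≤ Cardinal.sum (fun _ : J => 2 ^ κ) := Cardinal.sum_le_sum _ _ hsummand
          _ = #J * 2 ^ κ := Cardinal.sum_const' _ _
          _ ≤ 2 ^ κ * 2 ^ κ := by
              refine mul_le_mul' ?_ le_rfl
              rw [Cardinal.mk_ord_toType]
              exact Order.succ_le_of_lt (Cardinal.cantor κ)
          _ = 2 ^ (κ + κ) := (Cardinal.power_add 2 κ κ).symm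
          _ = 2 ^ κ := by rw [Cardinal.add_eq_self hκ]
      exact h1.trans_le ((Cardinal.mk_le_mk_of_subset h2).trans (h3.trans h4))
    exact not_le_of_gt (Order.lt_succ ((2 : Cardinal.{u}) ^ κ)) (hι.trans hcount)
  · push_neg at hall
    obtain ⟨x, hx⟩ := hall
    -- the sequence never stops, giving a full sequence with coherent colors
    have hmem : ∀ j : J, erSeq J F x j ∈ erSet J F x j := fun j =>
      erSeq_mem (fun i _ => hx i)
    have hprop : ∀ i j : J, i < j →
        erSeq J F x i ≠ erSeq J F x j ∧
        F (erSeq J F x i) (erSeq J F x j) = F (erSeq J F x i) x := by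
      intro i j hij
      exact hmem j i hij
    have hinj : Function.Injective (erSeq J F x) := by
      intro i j hij
      rcases lt_trichotomy i j with h | h | h
      · exact absurd hij (hprop i j h).1
      · exact h
      · exact absurd hij.symm (hprop j i h).1
    -- pigeonhole
    let g : J → C := fun j => F (erSeq J F x j) x
    have hJcard : Order.succ κ ≤ #J := le_of_eq (Cardinal.mk_ord_toType _).symm
    obtain ⟨c, hc⟩ := Cardinal.infinite_pigeonhole_card g (Order.succ κ) hJcard
      (hκ.trans (Order.le_succ κ))
      (by
        rw [(Cardinal.isRegular_succ hκ).cof_eq]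
        exact hC.trans_lt (Order.lt_succ κ))
    refine ⟨erSeq J F x '' (g ⁻¹' {c}), c, ?_, ?_⟩
    · rwa [Cardinal.mk_image_eq hinj]
    · rintro - ⟨i, hi, rfl⟩ - ⟨j, hj, rfl⟩ hne
      have hij : i ≠ j := fun h => hne (by rw [h])
      rcases lt_or_gt_of_ne hij with h | h
      · rw [(hprop i j h).2]
        exact hi
      · rw [hF, (hprop j i h).2]
        exact hj

end ErdosRado

/-! ### The main theorem -/

theorem card_le_of_homogeneous (X : Type u) [TopologicalSpace X] (n : ℕ)
    (hhom : ∀ x y : X, ∃ h : X ≃ₜ X, h x = y)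
    (hX : ThetaUrysohn X n) :
    #X ≤ 2 ^ (thetaUc X n * piChar X) := by
  by_cases hempty : IsEmpty X
  · simp [Cardinal.mk_eq_zero X]
  rw [not_isEmpty_iff] at hempty
  have h1π : 1 ≤ piChar X := one_le_piChar
  have h1μ : 1 ≤ thetaUc X n := one_le_thetaUc n
  set μ := thetaUc X n with hμdef
  set π := piChar X with hπdef
  have hμκ : μ ≤ μ * π := by
    calc μ = μ * 1 := (mul_one μ).symm
      _ ≤ μ * π := mul_le_mul' le_rfl h1π
  by_cases hfin : π < ℵ₀
  · -- finite π-character case: every point has a minimal nonempty open set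
    have hmin : ∀ x : X, ∃ P : Set X, IsOpen P ∧ P.Nonempty ∧
        ∀ U : Set X, IsOpen U → x ∈ U → P ⊆ U := by
      intro x
      obtain ⟨B, hB1, hB2, hB3⟩ := exists_piBase x
      have hBfin : B.Finite := Cardinal.lt_aleph0_iff_set_finite.mp (hB1.trans_lt hfin)
      by_contra hcon
      push_neg at hcon
      have hU : ∀ P ∈ B, ∃ U : Set X, IsOpen U ∧ x ∈ U ∧ ¬P ⊆ U := by
        intro P hP
        obtain ⟨U, hU1, hU2, hU3⟩ := hcon P (hB2 P hP).1 (hB2 P hP).2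
        exact ⟨U, hU1, hU2, hU3⟩
      choose! Uf hUf1 hUf2 hUf3 using hU
      have hopen : IsOpen (⋂ P ∈ B, Uf P) := hBfin.isOpen_biInter (fun P hP => hUf1 P hP)
      have hxmem : x ∈ ⋂ P ∈ B, Uf P := mem_iInter₂.mpr (fun P hP => hUf2 P hP)
      obtain ⟨P₀, hP₀, hsub⟩ := hB3 _ hopen hxmem
      exact hUf3 P₀ hP₀ (hsub.trans (biInter_subset_of_mem hP₀))
    choose Pf hPopen hPne hPmin using hmin
    have hPinj : Function.Injective Pf := by
      intro x y hxy
      by_contra hne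
      obtain ⟨U, V, hU, hV, hxU, hyV, hdisj⟩ := hX x y hne
      obtain ⟨z, hz⟩ := hPne x
      have hzU : z ∈ thetaClN X n U := subset_thetaClN n U (hPmin x U hU hxU hz)
      have hzV : z ∈ thetaClN X n V := subset_thetaClN n V (hPmin y V hV hyV (hxy ▸ hz))
      exact absurd hdisj (by
        rw [eq_empty_iff_forall_notMem]
        push_neg
        exact ⟨z, hzU, hzV⟩)
    have hXle : #X ≤ μ := by
      refine le_thetaUc (Set.range Pf) ?_ ?_ (Cardinal.mk_range_eq Pf hPinj).symm
      · rintro - ⟨x, rfl⟩; exact hPopen x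
      · rintro - ⟨x, rfl⟩ - ⟨y, rfl⟩ hne
        have hxy : x ≠ y := fun h => hne (by rw [h])
        obtain ⟨U, V, hU, hV, hxU, hyV, hdisj⟩ := hX x y hxy
        have h1 : thetaClN X n (Pf x) ⊆ thetaClN X n U :=
          thetaClN_mono n (hPmin x U hU hxU)
        have h2 : thetaClN X n (Pf y) ⊆ thetaClN X n V :=
          thetaClN_mono n (hPmin y V hV hyV)
        rw [← subset_empty_iff]
        calc thetaClN X n (Pf x) ∩ thetaClN X n (Pf y)
            ⊆ thetaClN X n U ∩ thetaClN X n V := inter_subset_inter h1 h2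
          _ ⊆ ∅ := hdisj.subset
    calc #X ≤ μ := hXle
      _ ≤ 2 ^ μ := (Cardinal.cantor μ).le
      _ ≤ 2 ^ (μ * π) := Cardinal.power_le_power_left two_ne_zero hμκ
  · -- infinite case, via Erdős–Rado
    rw [not_lt] at hfin
    set κ := μ * π with hκdef
    have hκinf : ℵ₀ ≤ κ := by
      calc ℵ₀ ≤ π := hfin
        _ = 1 * π := (one_mul π).symm
        _ ≤ μ * π := mul_le_mul' h1μ le_rfl
    by_contra hcon
    rw [not_le] at hcon
    have hsucc : Order.succ ((2 : Cardinal.{u}) ^ κ) ≤ #X := Order.succ_le_of_lt hcon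
    set ι := (Order.succ ((2 : Cardinal.{u}) ^ κ)).ord.ToType with hιdef
    have hιcard : #ι = Order.succ ((2 : Cardinal.{u}) ^ κ) := Cardinal.mk_ord_toType _
    obtain ⟨emb⟩ : Nonempty (ι ↪ X) := by
      rw [← Cardinal.le_def, hιcard]
      exact hsucc
    -- homogeneity: homeomorphisms moving a fixed point
    obtain ⟨e₀⟩ := hempty
    have hhom' : ∀ x : X, ∃ h : X ≃ₜ X, h e₀ = x := fun x => hhom e₀ x
    choose hom homspec using hhom'
    -- π-base at e₀
    obtain ⟨B, hB1, hB2, hB3⟩ := exists_piBase e₀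
    have hCne : Nonempty ↥B := by
      obtain ⟨U, hU, -⟩ := hB3 univ isOpen_univ (mem_univ _)
      exact ⟨⟨U, hU⟩⟩
    have hCcard : #↥B ≤ κ := by
      calc #↥B ≤ π := hB1
        _ = 1 * π := (one_mul π).symm
        _ ≤ μ * π := mul_le_mul' h1μ le_rfl
    -- the separating property
    have hsep : ∀ p q : ι, p ≠ q → ∃ W ∈ B,
        thetaClN X n (hom (emb p) '' W) ∩ thetaClN X n (hom (emb q) '' W) = ∅ := by
      intro p q hpq
      have hxy : emb p ≠ emb q := fun h => hpq (emb.injective h)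
      obtain ⟨U, V, hU, hV, hxU, hyV, hdisj⟩ := hX (emb p) (emb q) hxy
      have hNopen : IsOpen ((hom (emb p)) ⁻¹' U ∩ (hom (emb q)) ⁻¹' V) :=
        (hU.preimage (hom (emb p)).continuous).inter (hV.preimage (hom (emb q)).continuous)
      have hNe : e₀ ∈ (hom (emb p)) ⁻¹' U ∩ (hom (emb q)) ⁻¹' V := by
        constructor
        · show hom (emb p) e₀ ∈ U
          rw [homspec]; exact hxU
        · show hom (emb q) e₀ ∈ V
          rw [homspec]; exact hyV
      obtain ⟨W, hWB, hWsub⟩ := hB3 _ hNopen hNe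
      refine ⟨W, hWB, ?_⟩
      have h1 : hom (emb p) '' W ⊆ U := by
        rw [image_subset_iff]
        exact hWsub.trans inter_subset_left
      have h2 : hom (emb q) '' W ⊆ V := by
        rw [image_subset_iff]
        exact hWsub.trans inter_subset_right
      rw [← subset_empty_iff]
      calc thetaClN X n (hom (emb p) '' W) ∩ thetaClN X n (hom (emb q) '' W)
          ⊆ thetaClN X n U ∩ thetaClN X n V :=
            inter_subset_inter (thetaClN_mono n h1) (thetaClN_mono n h2)
        _ ⊆ ∅ := hdisj.subset
    -- coloring
    let G : ι → ι → ↥B := fun p q =>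
      if h : p < q then ⟨(hsep p q h.ne).choose, (hsep p q h.ne).choose_spec.1⟩
      else Classical.arbitrary ↥B
    let F : ι → ι → ↥B := fun p q => G (min p q) (max p q)
    have hFsymm : ∀ p q, F p q = F q p := by
      intro p q
      simp only [F, min_comm, max_comm]
      rw [min_comm p q, max_comm p q]
    have hFprop : ∀ p q : ι, p ≠ q →
        thetaClN X n (hom (emb p) '' (F p q : Set X)) ∩
          thetaClN X n (hom (emb q) '' (F p q : Set X)) = ∅ := by
      intro p q hpq
      rcases lt_or_gt_of_ne hpq with h | h
      · have hmin : min p q = p := min_eq_left h.le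
        have hmax : max p q = q := max_eq_right h.le
        simp only [F, hmin, hmax, G, dif_pos h]
        exact (hsep p q h.ne).choose_spec.2
      · have hmin : min p q = q := min_eq_right h.le
        have hmax : max p q = p := max_eq_left h.le
        simp only [F, hmin, hmax, G, dif_pos h]
        rw [inter_comm]
        exact (hsep q p h.ne).choose_spec.2
    -- apply Erdős–Rado
    obtain ⟨H, c, hHcard, hHcolor⟩ := erdos_rado_pairs hκinf hCcard (le_of_eq hιcard.symm) F
      hFsymm
    -- build the cellular family
    let Q : ↥H → Set X := fun p => hom (emb p.1) '' (c : Set X)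
    have hQne : ∀ p : ↥H, (Q p).Nonempty := by
      intro p
      exact ((hB2 c.1 c.2).2).image _
    have hQdisj : ∀ p q : ↥H, p ≠ q →
        thetaClN X n (Q p) ∩ thetaClN X n (Q q) = ∅ := by
      intro p q hpq
      have hne : p.1 ≠ q.1 := fun h => hpq (Subtype.ext h)
      have := hHcolor p.1 p.2 q.1 q.2 hne
      have h2 := hFprop p.1 q.1 hne
      rwa [this] at h2
    have hQinj : Function.Injective Q := by
      intro p q hpq
      by_contra hne
      obtain ⟨z, hz⟩ := hQne p
      have h1 : z ∈ thetaClN X n (Q p) := subset_thetaClN n _ hz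
      have h2 : z ∈ thetaClN X n (Q q) := subset_thetaClN n _ (hpq ▸ hz)
      have := hQdisj p q hne
      rw [eq_empty_iff_forall_notMem] at this
      exact this z ⟨h1, h2⟩
    have hV : #(Set.range Q) ≤ μ := by
      refine le_thetaUc (Set.range Q) ?_ ?_ rfl
      · rintro - ⟨p, rfl⟩
        exact (Homeomorph.isOpen_image _).mpr (hB2 c.1 c.2).1
      · rintro - ⟨p, rfl⟩ - ⟨q, rfl⟩ hne
        have hpq : p ≠ q := fun h => hne (by rw [h])
        exact hQdisj p q hpq
    have hHV : Order.succ κ ≤ #(Set.range Q) := by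
      rw [Cardinal.mk_range_eq Q hQinj]
      exact hHcard
    have : Order.succ κ ≤ κ := (hHV.trans hV).trans hμκ
    exact not_le_of_gt (Order.lt_succ κ) this
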